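/- Let P and Q be orthogonal projections on a Hilbert space with ‖P(I − Q)‖ < 1 and ‖Q(I − P)‖ < 1. Then ‖P(I−Q)‖ = ‖Q(I−P)‖ = ‖P − Q‖. -/

import Mathlib

open scoped InnerProductSpace

section KatoAux

variable {E : Type*} [NormedAddCommGroup E] [InnerProductSpace ℂ E] [CompleteSpace E]

private lemma kato_symm (A : E →L[ℂ] E) (hA : IsSelfAdjoint A) (x y : E) :
    ⟪x, A y⟫_ℂ = ⟪A x, y⟫_ℂ := by
  conv_lhs => rw [← hA.adjoint_eq]
  exact ContinuousLinearMap.adjoint_inner_right A x y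

private lemma kato_inner_proj (R : E →L[ℂ] E) (hR : IsIdempotentElem R)
    (hRsa : IsSelfAdjoint R) (y : E) : ⟪y, R y⟫_ℂ = ⟪R y, R y⟫_ℂ := by
  calc ⟪y, R y⟫_ℂ = ⟪y, R (R y)⟫_ℂ := by rw [← ContinuousLinearMap.mul_apply, hR.eq]
    _ = ⟪R y, R y⟫_ℂ := kato_symm R hRsa y (R y)

private lemma kato_norm_sub_le_max (P Q : E →L[ℂ] E)
    (hP : IsIdempotentElem P) (hQ : IsIdempotentElem Q)
    (hPsa : IsSelfAdjoint P) (hQsa : IsSelfAdjoint Q) :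
    ‖P - Q‖ ≤ max ‖P * (1 - Q)‖ ‖Q * (1 - P)‖ := by
  set a := ‖P * (1 - Q)‖ with ha_def
  set b := ‖Q * (1 - P)‖ with hb_def
  set M := max a b with hM_def
  have hM : (0 : ℝ) ≤ M := le_trans (norm_nonneg _) (le_max_left _ _)
  have hPP : ∀ x : E →L[ℂ] E, P * (P * x) = P * x := fun x => by rw [← mul_assoc, hP.eq]
  have hQQ : ∀ x : E →L[ℂ] E, Q * (Q * x) = Q * x := fun x => by rw [← mul_assoc, hQ.eq]
  have hDD : (P - Q) * (P - Q) = P * (1 - Q) * P + (1 - P) * (Q * (1 - P)) := by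
    simp only [mul_sub, sub_mul, mul_one, one_mul, hP.eq, hQ.eq, mul_assoc, hPP, hQQ]
    abel
  have hQ1 : IsIdempotentElem (1 - Q) := hQ.one_sub
  have hQ1sa : IsSelfAdjoint (1 - Q) := (IsSelfAdjoint.one _).sub hQsa
  have hP1 : IsIdempotentElem (1 - P) := hP.one_sub
  have hP1sa : IsSelfAdjoint (1 - P) := (IsSelfAdjoint.one _).sub hPsa
  have hnorm1 : ‖(1 - Q) * P‖ = a := by
    rw [ha_def, ← norm_star (P * (1 - Q))]
    congr 1
    rw [star_mul, star_sub, star_one, hPsa.star_eq, hQsa.star_eq]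
  apply ContinuousLinearMap.opNorm_le_bound _ hM
  intro x
  have hkey : ‖(P - Q) x‖ ^ 2 = ‖(1 - Q) (P x)‖ ^ 2 + ‖Q ((1 - P) x)‖ ^ 2 := by
    have c1 : ⟪(P - Q) x, (P - Q) x⟫_ℂ =
        ⟪(1 - Q) (P x), (1 - Q) (P x)⟫_ℂ + ⟪Q ((1 - P) x), Q ((1 - P) x)⟫_ℂ := by
      calc ⟪(P - Q) x, (P - Q) x⟫_ℂ = ⟪x, ((P - Q) * (P - Q)) x⟫_ℂ := by
            rw [ContinuousLinearMap.mul_apply]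
            exact (kato_symm (P - Q) (hPsa.sub hQsa) x ((P - Q) x)).symm
        _ = ⟪x, (P * (1 - Q) * P) x⟫_ℂ + ⟪x, ((1 - P) * (Q * (1 - P))) x⟫_ℂ := by
            rw [hDD, ContinuousLinearMap.add_apply, inner_add_right]
        _ = ⟪(1 - Q) (P x), (1 - Q) (P x)⟫_ℂ + ⟪Q ((1 - P) x), Q ((1 - P) x)⟫_ℂ := by
            congr 1
            · rw [mul_assoc, ContinuousLinearMap.mul_apply,
                kato_symm P hPsa x (((1 - Q) * P) x), ContinuousLinearMap.mul_apply]
              exact kato_inner_proj _ hQ1 hQ1sa (P x)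
            · rw [ContinuousLinearMap.mul_apply,
                kato_symm (1 - P) hP1sa x ((Q * (1 - P)) x), ContinuousLinearMap.mul_apply]
              exact kato_inner_proj _ hQ hQsa ((1 - P) x)
    have h := congrArg (RCLike.re (K := ℂ)) c1
    simpa only [map_add, inner_self_eq_norm_sq] using h
  have hb1 : ‖(1 - Q) (P x)‖ ≤ a * ‖P x‖ := by
    have h : (1 - Q) (P x) = ((1 - Q) * P) (P x) := by
      rw [ContinuousLinearMap.mul_apply, ← ContinuousLinearMap.mul_apply P P, hP.eq]
    rw [h, ← hnorm1]
    exact ContinuousLinearMap.le_opNorm _ _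
  have hb2 : ‖Q ((1 - P) x)‖ ≤ b * ‖(1 - P) x‖ := by
    have h : Q ((1 - P) x) = (Q * (1 - P)) ((1 - P) x) := by
      rw [ContinuousLinearMap.mul_apply,
        ← ContinuousLinearMap.mul_apply (1 - P) (1 - P), hP1.eq]
    rw [h, hb_def]
    exact ContinuousLinearMap.le_opNorm _ _
  have hpyth : ‖P x‖ ^ 2 + ‖(1 - P) x‖ ^ 2 = ‖x‖ ^ 2 := by
    have h0 : P ((1 - P) x) = 0 := by
      rw [← ContinuousLinearMap.mul_apply, mul_sub, mul_one, hP.eq, sub_self,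
        ContinuousLinearMap.zero_apply]
    have horth : ⟪P x, (1 - P) x⟫_ℂ = 0 := by
      rw [← kato_symm P hPsa x ((1 - P) x), h0, inner_zero_right]
    have hsum : P x + (1 - P) x = x := by
      simp [ContinuousLinearMap.sub_apply]
    have hh := norm_add_sq_eq_norm_sq_add_norm_sq_of_inner_eq_zero (P x) ((1 - P) x) horth
    rw [hsum] at hh
    nlinarith [hh]
  have haM : a ≤ M := le_max_left _ _
  have hbM : b ≤ M := le_max_right _ _
  have hsq : ‖(P - Q) x‖ ^ 2 ≤ (M * ‖x‖) ^ 2 := by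
    calc ‖(P - Q) x‖ ^ 2 = ‖(1 - Q) (P x)‖ ^ 2 + ‖Q ((1 - P) x)‖ ^ 2 := hkey
      _ ≤ (a * ‖P x‖) ^ 2 + (b * ‖(1 - P) x‖) ^ 2 :=
          add_le_add (pow_le_pow_left₀ (norm_nonneg _) hb1 2)
            (pow_le_pow_left₀ (norm_nonneg _) hb2 2)
      _ ≤ (M * ‖P x‖) ^ 2 + (M * ‖(1 - P) x‖) ^ 2 :=
          add_le_add
            (pow_le_pow_left₀ (by positivity)
              (mul_le_mul_of_nonneg_right haM (norm_nonneg _)) 2)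
            (pow_le_pow_left₀ (by positivity)
              (mul_le_mul_of_nonneg_right hbM (norm_nonneg _)) 2)
      _ = M ^ 2 * (‖P x‖ ^ 2 + ‖(1 - P) x‖ ^ 2) := by ring
      _ = (M * ‖x‖) ^ 2 := by rw [hpyth]; ring
  have h := Real.sqrt_le_sqrt hsq
  rwa [Real.sqrt_sq (norm_nonneg _), Real.sqrt_sq (by positivity)] at h

private lemma kato_aux (P Q : E →L[ℂ] E)
    (hP : IsIdempotentElem P) (hQ : IsIdempotentElem Q)
    (hPsa : IsSelfAdjoint P) (hQsa : IsSelfAdjoint Q)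
    (h1 : ‖P * (1 - Q)‖ < 1) (hlt : ‖Q * (1 - P)‖ < ‖P * (1 - Q)‖)
    (hd : ‖P - Q‖ ≤ ‖P * (1 - Q)‖) : False := by
  set a := ‖P * (1 - Q)‖ with ha_def
  set b := ‖Q * (1 - P)‖ with hb_def
  have hPP : ∀ x : E →L[ℂ] E, P * (P * x) = P * x := fun x => by rw [← mul_assoc, hP.eq]
  have hQQ : ∀ x : E →L[ℂ] E, Q * (Q * x) = Q * x := fun x => by rw [← mul_assoc, hQ.eq]
  have hA : P * (1 - Q) * ((1 - Q) * P) = P * ((P - Q) * (P - Q)) := by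
    simp only [mul_sub, sub_mul, mul_one, one_mul, hP.eq, hQ.eq, mul_assoc, hPP, hQQ]
    abel
  have hB : Q * (1 - P) * ((1 - P) * Q) = Q * ((P - Q) * (P - Q)) := by
    simp only [mul_sub, sub_mul, mul_one, one_mul, hP.eq, hQ.eq, mul_assoc, hPP, hQQ]
    abel
  have hPC : P * ((P - Q) * (P - Q)) = ((P - Q) * (P - Q)) * P := by
    simp only [mul_sub, sub_mul, mul_one, one_mul, hP.eq, hQ.eq, mul_assoc, hPP, hQQ]
    abel
  have hQC : Q * ((P - Q) * (P - Q)) = ((P - Q) * (P - Q)) * Q := by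
    simp only [mul_sub, sub_mul, mul_one, one_mul, hP.eq, hQ.eq, mul_assoc, hPP, hQQ]
    abel
  set C := (P - Q) * (P - Q) with hC_def
  have hstarP : star (P * (1 - Q)) = (1 - Q) * P := by
    rw [star_mul, star_sub, star_one, hPsa.star_eq, hQsa.star_eq]
  have hstarQ : star (Q * (1 - P)) = (1 - P) * Q := by
    rw [star_mul, star_sub, star_one, hPsa.star_eq, hQsa.star_eq]
  have ha2 : a * a = ‖P * C‖ := by
    calc a * a = ‖P * (1 - Q) * star (P * (1 - Q))‖ := (CStarRing.norm_self_mul_star).symm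
      _ = ‖P * C‖ := by rw [hstarP, hA]
  have hb2 : b * b = ‖Q * C‖ := by
    calc b * b = ‖Q * (1 - P) * star (Q * (1 - P))‖ := (CStarRing.norm_self_mul_star).symm
      _ = ‖Q * C‖ := by rw [hstarQ, hB]
  have hDsa : IsSelfAdjoint (P - Q) := hPsa.sub hQsa
  have hCsa : IsSelfAdjoint C := by
    rw [IsSelfAdjoint, hC_def, star_mul, hDsa.star_eq]
  have hAsa : IsSelfAdjoint (P * C) := by
    rw [IsSelfAdjoint, star_mul, hCsa.star_eq, hPsa.star_eq, ← hPC]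
  have hBsa : IsSelfAdjoint (Q * C) := by
    rw [IsSelfAdjoint, star_mul, hCsa.star_eq, hQsa.star_eq, ← hQC]
  have hApow : ∀ n : ℕ, ‖(P * C) ^ 2 ^ n‖ = ‖P * C‖ ^ 2 ^ n := fun n => by
    simpa using congrArg NNReal.toReal (hAsa.nnnorm_pow_two_pow n)
  have hBpow : ∀ n : ℕ, ‖(Q * C) ^ 2 ^ n‖ = ‖Q * C‖ ^ 2 ^ n := fun n => by
    simpa using congrArg NNReal.toReal (hBsa.nnnorm_pow_two_pow n)
  have hPpow : ∀ n : ℕ, P ^ 2 ^ n = P := fun n => by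
    have h := hP.pow_succ_eq (2 ^ n - 1)
    rwa [Nat.sub_add_cancel Nat.one_le_two_pow] at h
  have hQpow : ∀ n : ℕ, Q ^ 2 ^ n = Q := fun n => by
    have h := hQ.pow_succ_eq (2 ^ n - 1)
    rwa [Nat.sub_add_cancel Nat.one_le_two_pow] at h
  have hPCpow : ∀ n : ℕ, (P * C) ^ 2 ^ n = P * C ^ 2 ^ n := fun n => by
    have hc : Commute P C := hPC
    rw [hc.mul_pow, hPpow n]
  have hQCpow : ∀ n : ℕ, (Q * C) ^ 2 ^ n = Q * C ^ 2 ^ n := fun n => by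
    have hc : Commute Q C := hQC
    rw [hc.mul_pow, hQpow n]
  have hdiff : ∀ m : ℕ, P * C ^ m - Q * C ^ m = (P - Q) ^ (2 * m + 1) := fun m => by
    rw [← sub_mul]
    calc (P - Q) * C ^ m = (P - Q) * ((P - Q) ^ 2) ^ m := by rw [hC_def, ← pow_two]
      _ = (P - Q) * (P - Q) ^ (2 * m) := by rw [← pow_mul]
      _ = (P - Q) ^ (2 * m + 1) := (pow_succ' _ _).symm
  have key : ∀ N : ℕ, a ^ (2 * 2 ^ N) ≤ b ^ (2 * 2 ^ N) + a ^ (2 * 2 ^ N) * a := by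
    intro N
    have e1 : a ^ (2 * 2 ^ N) = ‖P * C ^ 2 ^ N‖ := by
      calc a ^ (2 * 2 ^ N) = (a * a) ^ 2 ^ N := by rw [pow_mul, pow_two]
        _ = ‖P * C‖ ^ 2 ^ N := by rw [ha2]
        _ = ‖(P * C) ^ 2 ^ N‖ := (hApow N).symm
        _ = ‖P * C ^ 2 ^ N‖ := by rw [hPCpow N]
    have e2 : b ^ (2 * 2 ^ N) = ‖Q * C ^ 2 ^ N‖ := by
      calc b ^ (2 * 2 ^ N) = (b * b) ^ 2 ^ N := by rw [pow_mul, pow_two]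
        _ = ‖Q * C‖ ^ 2 ^ N := by rw [hb2]
        _ = ‖(Q * C) ^ 2 ^ N‖ := (hBpow N).symm
        _ = ‖Q * C ^ 2 ^ N‖ := by rw [hQCpow N]
    have e3 : ‖P * C ^ 2 ^ N‖ ≤ ‖Q * C ^ 2 ^ N‖ + ‖P * C ^ 2 ^ N - Q * C ^ 2 ^ N‖ := by
      calc ‖P * C ^ 2 ^ N‖ = ‖Q * C ^ 2 ^ N + (P * C ^ 2 ^ N - Q * C ^ 2 ^ N)‖ := by
            congr 1; abel
        _ ≤ _ := norm_add_le _ _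
    have e4 : ‖P * C ^ 2 ^ N - Q * C ^ 2 ^ N‖ ≤ a ^ (2 * 2 ^ N + 1) := by
      rw [hdiff (2 ^ N)]
      calc ‖(P - Q) ^ (2 * 2 ^ N + 1)‖ ≤ ‖P - Q‖ ^ (2 * 2 ^ N + 1) :=
            norm_pow_le' _ (by omega)
        _ ≤ a ^ (2 * 2 ^ N + 1) := pow_le_pow_left₀ (norm_nonneg _) hd _
    have e5 : a ^ (2 * 2 ^ N + 1) = a ^ (2 * 2 ^ N) * a := pow_succ a _
    linarith
  have h0b : (0 : ℝ) ≤ b := norm_nonneg _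
  have h0a : (0 : ℝ) < a := lt_of_le_of_lt h0b hlt
  have hr1 : b / a < 1 := (div_lt_one h0a).2 hlt
  have hr0 : (0 : ℝ) ≤ b / a := by positivity
  obtain ⟨N, hN⟩ := exists_pow_lt_of_lt_one (by linarith : (0:ℝ) < 1 - a) hr1
  have hkN := key N
  have hbm : b ^ (2 * 2 ^ N) = a ^ (2 * 2 ^ N) * (b / a) ^ (2 * 2 ^ N) := by
    rw [← mul_pow]
    congr 1
    field_simp
  have hpos : (0 : ℝ) < a ^ (2 * 2 ^ N) := pow_pos h0a _
  rw [hbm] at hkN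
  have h2 : 1 - a ≤ (b / a) ^ (2 * 2 ^ N) := by
    have h3 : a ^ (2 * 2 ^ N) * (1 - a) ≤ a ^ (2 * 2 ^ N) * (b / a) ^ (2 * 2 ^ N) := by
      nlinarith
    exact le_of_mul_le_mul_left h3 hpos
  have h4 : (b / a) ^ (2 * 2 ^ N) ≤ (b / a) ^ N := by
    apply pow_le_pow_of_le_one hr0 hr1.le
    calc N ≤ 2 ^ N := (Nat.lt_two_pow_self (n := N)).le
      _ ≤ 2 * 2 ^ N := Nat.le_mul_of_pos_left (2 ^ N) (by norm_num)
  linarith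

end KatoAux

theorem kato_projection_alternative
    {E : Type*} [NormedAddCommGroup E] [InnerProductSpace ℂ E] [CompleteSpace E]
    (P Q : E →L[ℂ] E)
    (hP : IsIdempotentElem P) (hQ : IsIdempotentElem Q)
    (hPsa : IsSelfAdjoint P) (hQsa : IsSelfAdjoint Q)
    (h1 : ‖P * (1 - Q)‖ < 1) (h2 : ‖Q * (1 - P)‖ < 1) :
    ‖P * (1 - Q)‖ = ‖Q * (1 - P)‖ ∧ ‖P * (1 - Q)‖ = ‖P - Q‖ := by
  have hmax := kato_norm_sub_le_max P Q hP hQ hPsa hQsa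
  have hPnorm : ‖P‖ ≤ 1 := by
    have h := CStarRing.norm_star_mul_self (x := P)
    rw [hPsa.star_eq, hP.eq] at h
    nlinarith [norm_nonneg P]
  have hle : ‖P * (1 - Q)‖ ≤ ‖P - Q‖ := by
    have hEq : P * (1 - Q) = P * (P - Q) := by
      rw [mul_sub, mul_sub, mul_one, hP.eq]
    rw [hEq]
    calc ‖P * (P - Q)‖ ≤ ‖P‖ * ‖P - Q‖ := norm_mul_le _ _
      _ ≤ 1 * ‖P - Q‖ := mul_le_mul_of_nonneg_right hPnorm (norm_nonneg _)
      _ = ‖P - Q‖ := one_mul _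
  rcases lt_trichotomy ‖P * (1 - Q)‖ ‖Q * (1 - P)‖ with h | h | h
  · exact absurd (kato_aux Q P hQ hP hQsa hPsa h2 h
      (by rw [norm_sub_rev]; exact hmax.trans_eq (max_eq_right h.le))) (by simp)
  · have hda : ‖P - Q‖ ≤ ‖P * (1 - Q)‖ := by
      calc ‖P - Q‖ ≤ max ‖P * (1 - Q)‖ ‖Q * (1 - P)‖ := hmax
        _ = ‖P * (1 - Q)‖ := by rw [← h, max_self]
    exact ⟨h, le_antisymm hle hda⟩
  · exact absurd (kato_aux P Q hP hQ hPsa hQsa h1 h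
      (hmax.trans_eq (max_eq_left h.le))) (by simp)
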